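/- Let d ≥ 3 and θ > 0. Let 𝒬 be a family of cubes satisfying (G), and let ω : ℝ^d → ℝ be measurable with 0 < δ ≤ ω(x) ≤ 1 for all x and some δ > 0. Let a be an (ω,𝒬)-atom with supp a ⊆ K ⊆ Q** for some cube K and some Q ∈ 𝒬, ‖a‖_∞ ≤ |K|^{-1}, and ∫_K a(x) ω(x) dx = 0. Then a ∈ H¹_at(𝒜_𝒬) and ‖a‖_{H¹_at(𝒜_𝒬)} ≤ 1 + (|K|^{-1} + |Q|^{-1}) · |Q**|. -/

import Mathlib

open MeasureTheory Filter
open scoped ENNReal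

noncomputable section

/-- `ℝ^d` as a Euclidean space. -/
abbrev Rd (d : ℕ) := EuclideanSpace ℝ (Fin d)

/-- A cube in `ℝ^d`, given by its center and (positive) radius. -/
structure Cube (d : ℕ) where
  center : Rd d
  radius : ℝ
  radius_pos : 0 < radius

/-- The underlying open set of a cube: `Q(c,r) = {y : max_i |c_i - y_i| < r}`. -/
def Cube.carrier {d : ℕ} (Q : Cube d) : Set (Rd d) :=
  {y | ∀ i, |Q.center i - y i| < Q.radius}

/-- The diameter `d_Q = 2 √d · r_Q` of a cube. -/
def Cube.diam {d : ℕ} (Q : Cube d) : ℝ := 2 * Real.sqrt d * Q.radius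

/-- The `k`-fold enlargement `Q^{*k} = Q(c_Q, (1+θ)^k r_Q)` of a cube, as a set. -/
def Cube.starSet {d : ℕ} (Q : Cube d) (θ : ℝ) (k : ℕ) : Set (Rd d) :=
  {y | ∀ i, |Q.center i - y i| < (1 + θ) ^ k * Q.radius}

/-- The condition (G) on a family of cubes: it is countable, the closures cover `ℝ^d`,
distinct cubes overlap in measure zero, and cubes whose fourfold enlargements meet have
comparable diameters (with constant `CG`). -/
def SatG {d : ℕ} (θ CG : ℝ) (𝒬 : Set (Cube d)) : Prop :=
  𝒬.Countable ∧
  (⋃ Q ∈ 𝒬, closure Q.carrier) = Set.univ ∧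
  (∀ Q₁ ∈ 𝒬, ∀ Q₂ ∈ 𝒬, Q₁ ≠ Q₂ → volume (Q₁.carrier ∩ Q₂.carrier) = 0) ∧
  (∀ Q₁ ∈ 𝒬, ∀ Q₂ ∈ 𝒬, (Q₁.starSet θ 4 ∩ Q₂.starSet θ 4).Nonempty →
    CG⁻¹ * Q₁.diam ≤ Q₂.diam ∧ Q₂.diam ≤ CG * Q₁.diam)

/-- An `(ω,𝒬)`-atom: either a function supported in a cube `K ⊆ Q^{**}` (`Q ∈ 𝒬`) with
`‖a‖_∞ ≤ |K|⁻¹` and `∫_K a ω = 0`, or `a = |Q|⁻¹ χ_Q` for some `Q ∈ 𝒬`.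
Taking `ω ≡ 1` gives the notion of a `𝒬`-atom. -/
def IsWAtom {d : ℕ} (θ : ℝ) (𝒬 : Set (Cube d)) (ω : Rd d → ℝ) (a : Rd d → ℝ) : Prop :=
  Integrable a ∧
  ((∃ Q ∈ 𝒬, ∃ K : Cube d, K.carrier ⊆ Q.starSet θ 2 ∧
      Function.support a ⊆ K.carrier ∧
      (∀ᵐ x ∂volume, |a x| ≤ ((volume K.carrier).toReal)⁻¹) ∧
      ∫ x in K.carrier, a x * ω x = 0) ∨
    (∃ Q ∈ 𝒬, a = (Q.carrier).indicator (fun _ => ((volume Q.carrier).toReal)⁻¹)))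

/-- `f = ∑ λ_j a_j` is an atomic decomposition: all `a_j` are atoms (i.e. satisfy `𝒜`),
`∑ |λ_j| < ∞`, and the partial sums converge to `f` in `L¹`. -/
def IsDecomp {d : ℕ} (𝒜 : (Rd d → ℝ) → Prop) (f : Rd d → ℝ)
    (lam : ℕ → ℝ) (a : ℕ → Rd d → ℝ) : Prop :=
  (∀ j, 𝒜 (a j)) ∧ Summable (fun j => |lam j|) ∧
  Tendsto (fun N => ∫ x, |f x - ∑ j ∈ Finset.range N, lam j * a j x|) atTop (nhds 0)

/-- Membership in the atomic Hardy space `H¹_at(𝒜)`. -/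
def MemH1at {d : ℕ} (𝒜 : (Rd d → ℝ) → Prop) (f : Rd d → ℝ) : Prop :=
  ∃ lam a, IsDecomp 𝒜 f lam a

/-- The atomic norm `‖f‖_{H¹_at(𝒜)} = inf ∑ |λ_j|` over all atomic decompositions. -/
def H1atNorm {d : ℕ} (𝒜 : (Rd d → ℝ) → Prop) (f : Rd d → ℝ) : ℝ :=
  sInf {s | ∃ lam a, IsDecomp 𝒜 f lam a ∧ s = ∑' j, |lam j|}

lemma coord_le_norm {d : ℕ} (x : Rd d) (i : Fin d) : |x i| ≤ ‖x‖ := by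
  rw [EuclideanSpace.norm_eq]
  rw [← Real.sqrt_sq_eq_abs]
  apply Real.sqrt_le_sqrt
  calc x i ^ 2 = ‖x i‖ ^ 2 := by rw [Real.norm_eq_abs, sq_abs]
    _ ≤ ∑ j, ‖x j‖ ^ 2 := Finset.single_le_sum (f := fun j => ‖x j‖ ^ 2)
        (fun j _ => sq_nonneg _) (Finset.mem_univ i)

lemma box_isOpen {d : ℕ} (c : Rd d) (r : ℝ) :
    IsOpen {y : Rd d | ∀ i, |c i - y i| < r} := by
  have h : {y : Rd d | ∀ i, |c i - y i| < r} = ⋂ i, {y | |c i - y i| < r} := by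
    ext y; simp [Set.mem_iInter]
  rw [h]
  refine isOpen_iInter_of_finite fun i => ?_
  have : Continuous fun y : Rd d => |c i - y i| := by
    apply continuous_abs.comp
    exact continuous_const.sub ((continuous_apply i).comp (PiLp.continuous_ofLp 2 _))
  exact isOpen_lt this continuous_const

lemma box_volume_pos {d : ℕ} (c : Rd d) (r : ℝ) (hr : 0 < r) :
    0 < volume {y : Rd d | ∀ i, |c i - y i| < r} := by
  refine lt_of_lt_of_le (Metric.measure_ball_pos volume c hr) (measure_mono ?_)
  intro y hy i
  have h1 : |(c - y) i| ≤ ‖c - y‖ := coord_le_norm _ i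
  have h2 : ‖c - y‖ = dist y c := by rw [dist_comm, dist_eq_norm]
  have h3 : (c - y) i = c i - y i := rfl
  rw [h3] at h1
  calc |c i - y i| ≤ dist y c := h2 ▸ h1
    _ < r := Metric.mem_ball.mp hy

lemma box_volume_lt_top {d : ℕ} (c : Rd d) (r : ℝ) :
    volume {y : Rd d | ∀ i, |c i - y i| < r} < ⊤ := by
  have hb : Bornology.IsBounded {y : Rd d | ∀ i, |c i - y i| < r} := by
    apply (Metric.isBounded_iff_subset_closedBall c).mpr
    refine ⟨Real.sqrt d * |r|, fun y hy => ?_⟩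
    simp only [Metric.mem_closedBall, dist_eq_norm]
    rw [EuclideanSpace.norm_eq]
    have hj : ∀ j, ‖(y - c) j‖ ^ 2 ≤ |r| ^ 2 := by
      intro j
      rw [Real.norm_eq_abs]
      have h3 : |(y - c) j| = |c j - y j| := by
        have h4 : (y - c) j = y j - c j := rfl
        rw [h4, abs_sub_comm]
      rw [h3]
      have h5 : |c j - y j| ≤ |r| := le_trans (le_of_lt (hy j)) (le_abs_self r)
      exact pow_le_pow_left₀ (abs_nonneg _) h5 2
    calc Real.sqrt (∑ j, ‖(y - c) j‖ ^ 2) ≤ Real.sqrt (∑ _j : Fin d, |r| ^ 2) :=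
          Real.sqrt_le_sqrt (Finset.sum_le_sum fun j _ => hj j)
      _ = Real.sqrt (d * |r| ^ 2) := by simp [Finset.sum_const, Finset.card_univ, mul_comm]
      _ ≤ Real.sqrt d * |r| := by
          rw [Real.sqrt_mul (Nat.cast_nonneg d), Real.sqrt_sq_eq_abs, abs_abs]
  exact hb.measure_lt_top

/-- an `(ω,𝒬)`-atom `a` with cancellation, supported in a cube `K ⊆ Q^{**}`,
belongs to `H¹_at(𝒜_𝒬)` with `‖a‖ ≤ 1 + (|K|⁻¹ + |Q|⁻¹)·|Q^{**}|`. -/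
theorem statement7 (d : ℕ) (hd : 3 ≤ d) (θ : ℝ) (hθ : 0 < θ) (CG : ℝ) (hCG : 1 ≤ CG)
    (𝒬 : Set (Cube d)) (hG : SatG θ CG 𝒬)
    (ω : Rd d → ℝ) (hωmeas : Measurable ω)
    (δ : ℝ) (hδ : 0 < δ) (hω : ∀ x, δ ≤ ω x ∧ ω x ≤ 1)
    (a : Rd d → ℝ) (haint : Integrable a)
    (Q : Cube d) (hQ : Q ∈ 𝒬) (K : Cube d)
    (hKQ : K.carrier ⊆ Q.starSet θ 2)
    (hsupp : Function.support a ⊆ K.carrier)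
    (hbound : ∀ᵐ x ∂volume, |a x| ≤ ((volume K.carrier).toReal)⁻¹)
    (hcancel : ∫ x in K.carrier, a x * ω x = 0) :
    MemH1at (IsWAtom θ 𝒬 (fun _ => 1)) a ∧
    H1atNorm (IsWAtom θ 𝒬 (fun _ => 1)) a ≤
      1 + (((volume K.carrier).toReal)⁻¹ + ((volume Q.carrier).toReal)⁻¹) *
        (volume (Q.starSet θ 2)).toReal := by

  classical
  -- basic measure facts about the cubes
  have hKmeas : MeasurableSet K.carrier := (box_isOpen K.center K.radius).measurableSet
  have hQmeas : MeasurableSet Q.carrier := (box_isOpen Q.center Q.radius).measurableSet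
  have hKvol0 : volume K.carrier ≠ 0 := (box_volume_pos K.center K.radius K.radius_pos).ne'
  have hKvoltop : volume K.carrier ≠ ⊤ := (box_volume_lt_top K.center K.radius).ne
  have hQvol0 : volume Q.carrier ≠ 0 := (box_volume_pos Q.center Q.radius Q.radius_pos).ne'
  have hQvoltop : volume Q.carrier ≠ ⊤ := (box_volume_lt_top Q.center Q.radius).ne
  have hrS : 0 < (1 + θ) ^ 2 * Q.radius := mul_pos (pow_pos (by linarith) 2) Q.radius_pos
  set K' : Cube d := ⟨Q.center, (1 + θ) ^ 2 * Q.radius, hrS⟩ with hK'def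
  have hK'carrier : K'.carrier = Q.starSet θ 2 := rfl
  have hK'meas : MeasurableSet K'.carrier := (box_isOpen K'.center K'.radius).measurableSet
  have hSvol0 : volume (Q.starSet θ 2) ≠ 0 := by
    rw [← hK'carrier]; exact (box_volume_pos K'.center K'.radius hrS).ne'
  have hSvoltop : volume (Q.starSet θ 2) ≠ ⊤ := by
    rw [← hK'carrier]; exact (box_volume_lt_top K'.center K'.radius).ne
  set vK := (volume K.carrier).toReal with hvK
  set vQ := (volume Q.carrier).toReal with hvQ
  set vS := (volume (Q.starSet θ 2)).toReal with hvS
  have hvKpos : 0 < vK := ENNReal.toReal_pos hKvol0 hKvoltop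
  have hvQpos : 0 < vQ := ENNReal.toReal_pos hQvol0 hQvoltop
  have hvSpos : 0 < vS := ENNReal.toReal_pos hSvol0 hSvoltop
  set Λ : ℝ := (vK⁻¹ + vQ⁻¹) * vS with hΛdef
  have hΛpos : 0 < Λ := by
    rw [hΛdef]
    exact mul_pos (add_pos (inv_pos.mpr hvKpos) (inv_pos.mpr hvQpos)) hvSpos
  -- Q ⊆ Q**
  have hQsub : Q.carrier ⊆ Q.starSet θ 2 := by
    intro y hy i
    refine lt_of_lt_of_le (hy i) ?_
    have h1 : (1 : ℝ) ≤ (1 + θ) ^ 2 := one_le_pow₀ (by linarith)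
    nlinarith [Q.radius_pos]
  -- the indicator atom
  set g : Rd d → ℝ := Q.carrier.indicator (fun _ => vQ⁻¹) with hgdef
  have hgint : Integrable g := by
    rw [hgdef]
    exact (integrable_indicator_iff hQmeas).mpr
      ((integrableOn_const_iff).mpr (Or.inr (box_volume_lt_top Q.center Q.radius)))
  have hgabs : ∀ x, |g x| ≤ vQ⁻¹ := by
    intro x
    rw [hgdef]
    by_cases hx : x ∈ Q.carrier
    · rw [Set.indicator_of_mem hx, abs_of_nonneg (inv_nonneg.mpr hvQpos.le)]
    · rw [Set.indicator_of_notMem hx, abs_zero]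
      exact inv_nonneg.mpr hvQpos.le
  have hgI : ∫ x, g x = 1 := by
    rw [hgdef, integral_indicator_const _ hQmeas, smul_eq_mul, measureReal_def, ← hvQ,
      mul_inv_cancel₀ hvQpos.ne']
  -- the mean of a
  set I : ℝ := ∫ x, a x with hIdef
  have hacompl : ∀ x, x ∉ K.carrier → a x = 0 := Function.support_subset_iff'.mp hsupp
  have hIK : I = ∫ x in K.carrier, a x := by
    rw [hIdef, setIntegral_eq_integral_of_forall_compl_eq_zero hacompl]
  have hIle : |I| ≤ 1 := by
    have h1 : ‖∫ x in K.carrier, a x‖ ≤ vK⁻¹ * (volume K.carrier).toReal := by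
      refine norm_setIntegral_le_of_norm_le_const_ae (lt_top_iff_ne_top.mpr hKvoltop) ?_
      exact ae_restrict_of_ae (hbound.mono fun x hx => by rwa [Real.norm_eq_abs])
    rw [hIK, ← Real.norm_eq_abs]
    calc ‖∫ x in K.carrier, a x‖ ≤ vK⁻¹ * vK := h1
      _ = 1 := inv_mul_cancel₀ hvKpos.ne'
  -- the cancellative part
  set b : Rd d → ℝ := fun x => a x - I * g x with hbdef
  have hbint : Integrable b := haint.sub (hgint.const_mul I)
  have hbcompl : ∀ x, x ∉ Q.starSet θ 2 → b x = 0 := by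
    intro x hx
    have hxK : x ∉ K.carrier := fun h => hx (hKQ h)
    have hxQ : x ∉ Q.carrier := fun h => hx (hQsub h)
    rw [hbdef]
    simp only [hacompl x hxK, hgdef, Set.indicator_of_notMem hxQ, mul_zero, sub_zero]
  have hbbound : ∀ᵐ x ∂volume, |b x| ≤ vK⁻¹ + vQ⁻¹ := by
    filter_upwards [hbound] with x hx
    calc |b x| = |a x - I * g x| := rfl
      _ ≤ |a x| + |I * g x| := abs_sub _ _
      _ ≤ vK⁻¹ + |I| * |g x| := by rw [abs_mul]; exact add_le_add hx le_rfl
      _ ≤ vK⁻¹ + 1 * vQ⁻¹ := by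
          refine add_le_add le_rfl (mul_le_mul hIle (hgabs x) (abs_nonneg _) zero_le_one)
      _ = vK⁻¹ + vQ⁻¹ := by rw [one_mul]
  have hbzero : ∫ x, b x = 0 := by
    rw [hbdef]
    rw [integral_sub haint (hgint.const_mul I), integral_const_mul, hgI, mul_one, ← hIdef,
      sub_self]
  -- the two atoms
  set A0 : Rd d → ℝ := fun x => Λ⁻¹ * b x with hA0def
  have hA0atom : IsWAtom θ 𝒬 (fun _ => 1) A0 := by
    refine ⟨hbint.const_mul _, Or.inl ⟨Q, hQ, K', le_of_eq hK'carrier, ?_, ?_, ?_⟩⟩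
    · intro x hx
      rw [hK'carrier]
      by_contra hc
      exact hx (show Λ⁻¹ * b x = 0 by rw [hbcompl x hc, mul_zero])
    · have hvol : (volume K'.carrier).toReal = vS := by rw [hK'carrier, ← hvS]
      rw [hvol]
      filter_upwards [hbbound] with x hx
      have h2 : |A0 x| = Λ⁻¹ * |b x| := by
        show |Λ⁻¹ * b x| = Λ⁻¹ * |b x|
        rw [abs_mul, abs_of_nonneg (inv_nonneg.mpr hΛpos.le)]
      rw [h2]
      calc Λ⁻¹ * |b x| ≤ Λ⁻¹ * (vK⁻¹ + vQ⁻¹) := by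
            exact mul_le_mul_of_nonneg_left hx (inv_nonneg.mpr hΛpos.le)
        _ = vS⁻¹ := by
            rw [hΛdef, mul_inv, mul_comm ((vK⁻¹ + vQ⁻¹)⁻¹), mul_assoc,
              inv_mul_cancel₀ (add_pos (inv_pos.mpr hvKpos) (inv_pos.mpr hvQpos)).ne',
              mul_one]
    · simp only [mul_one]
      have hcompl : ∀ x, x ∉ K'.carrier → A0 x = 0 := by
        intro x hx
        show Λ⁻¹ * b x = 0
        rw [hbcompl x (hK'carrier ▸ hx), mul_zero]
      rw [setIntegral_eq_integral_of_forall_compl_eq_zero hcompl, hA0def,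
        integral_const_mul, hbzero, mul_zero]
  have hA1atom : IsWAtom θ 𝒬 (fun _ => 1) g := ⟨hgint, Or.inr ⟨Q, hQ, by rw [hgdef, hvQ]⟩⟩
  -- the decomposition
  set lam : ℕ → ℝ := fun j => if j = 0 then Λ else if j = 1 then I else 0 with hlamdef
  set A : ℕ → Rd d → ℝ := fun j => if j = 0 then A0 else g with hAdef
  have hAatom : ∀ j, IsWAtom θ 𝒬 (fun _ => 1) (A j) := by
    intro j
    rw [hAdef]
    by_cases hj : j = 0 <;> simp [hj, hA0atom, hA1atom]
  have hlamzero : ∀ j ∉ ({0, 1} : Finset ℕ), lam j = 0 := by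
    intro j hj
    simp only [Finset.mem_insert, Finset.mem_singleton, not_or] at hj
    rw [hlamdef]
    simp [hj.1, hj.2]
  have hsummable : Summable fun j => |lam j| :=
    summable_of_ne_finset_zero (s := {0, 1}) fun j hj => by rw [hlamzero j hj, abs_zero]
  have hsumeq : ∀ N, 2 ≤ N → ∀ x, ∑ j ∈ Finset.range N, lam j * A j x = a x := by
    intro N hN x
    have h1 : ∑ j ∈ Finset.range N, lam j * A j x = ∑ j ∈ Finset.range 2, lam j * A j x := by
      refine (Finset.sum_subset (Finset.range_subset_range.mpr hN) fun j _ hj => ?_).symm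
      have hj2 : j ∉ ({0, 1} : Finset ℕ) := by
        simp only [Finset.mem_range] at hj
        simp only [Finset.mem_insert, Finset.mem_singleton, not_or]
        omega
      rw [hlamzero j hj2, zero_mul]
    rw [h1, Finset.sum_range_succ, Finset.sum_range_one]
    have h2 : lam 0 = Λ := by simp [hlamdef]
    have h3 : lam 1 = I := by simp [hlamdef]
    have h4 : A 0 x = A0 x := by simp [hAdef]
    have h5 : A 1 x = g x := by simp [hAdef]
    rw [h2, h3, h4, h5, hA0def]
    have : Λ * (Λ⁻¹ * b x) = b x := by
      rw [← mul_assoc, mul_inv_cancel₀ hΛpos.ne', one_mul]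
    rw [this, hbdef]
    ring
  have hdecomp : IsDecomp (IsWAtom θ 𝒬 (fun _ => 1)) a lam A := by
    refine ⟨hAatom, hsummable, ?_⟩
    have hev : (fun N => ∫ x, |a x - ∑ j ∈ Finset.range N, lam j * A j x|)
        =ᶠ[atTop] fun _ => (0 : ℝ) := by
      rw [Filter.eventuallyEq_iff_exists_mem]
      refine ⟨{N | 2 ≤ N}, mem_atTop 2, fun N hN => ?_⟩
      have : ∀ x, |a x - ∑ j ∈ Finset.range N, lam j * A j x| = 0 := by
        intro x; rw [hsumeq N hN x, sub_self, abs_zero]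
      simp only [this, integral_zero]
    exact Tendsto.congr' hev.symm tendsto_const_nhds
  have htsum : ∑' j, |lam j| = |Λ| + |I| := by
    rw [tsum_eq_sum (s := ({0, 1} : Finset ℕ))
      (fun j hj => by rw [hlamzero j hj, abs_zero])]
    rw [Finset.sum_insert (by simp), Finset.sum_singleton]
    have h2 : lam 0 = Λ := by simp [hlamdef]
    have h3 : lam 1 = I := by simp [hlamdef]
    rw [h2, h3]
  refine ⟨⟨lam, A, hdecomp⟩, ?_⟩
  have hbdd : BddBelow {s | ∃ lam' A', IsDecomp (IsWAtom θ 𝒬 (fun _ => 1)) a lam' A' ∧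
      s = ∑' j, |lam' j|} := by
    refine ⟨0, fun s hs => ?_⟩
    obtain ⟨lam', A', _, rfl⟩ := hs
    exact tsum_nonneg fun j => abs_nonneg _
  have hmem : |Λ| + |I| ∈ {s | ∃ lam' A', IsDecomp (IsWAtom θ 𝒬 (fun _ => 1)) a lam' A' ∧
      s = ∑' j, |lam' j|} := ⟨lam, A, hdecomp, htsum.symm⟩
  calc H1atNorm (IsWAtom θ 𝒬 (fun _ => 1)) a ≤ |Λ| + |I| := csInf_le hbdd hmem
    _ ≤ Λ + 1 := add_le_add (le_of_eq (abs_of_pos hΛpos)) hIle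
    _ = 1 + (vK⁻¹ + vQ⁻¹) * vS := by rw [hΛdef]; ring
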